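/- Let B, C, D be three non-collinear points of the Euclidean plane ℝ², let O be the circumcenter and r the circumradius of triangle BCD. Let A be a point such that A and D lie strictly on opposite sides of the line through B and C. Then dist(A, O) < r if and only if ∠BAC + ∠BDC > π, where ∠BAC denotes the undirected angle at A between rays AB and AC, valued in [0, π], and similarly for ∠BDC. -/

import Mathlib

open Real EuclideanGeometry

private lemma inner_coords (u v : EuclideanSpace ℝ (Fin 2)) :
    (inner ℝ u v : ℝ) = u 0 * v 0 + u 1 * v 1 := by
  simp [PiLp.inner_apply, Fin.sum_univ_two, RCLike.inner_apply, mul_comm]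

private lemma dist_sq_coords (x y : EuclideanSpace ℝ (Fin 2)) :
    dist x y ^ 2 = (x 0 - y 0) ^ 2 + (x 1 - y 1) ^ 2 := by
  rw [EuclideanSpace.dist_eq, Real.sq_sqrt (by positivity)]
  simp [Fin.sum_univ_two, Real.dist_eq, sq_abs]

private lemma sin_angle_coords (u v : EuclideanSpace ℝ (Fin 2)) :
    Real.sin (InnerProductGeometry.angle u v) * (‖u‖ * ‖v‖)
      = |u 0 * v 1 - u 1 * v 0| := by
  rw [InnerProductGeometry.sin_angle_mul_norm_mul_norm,
    show (inner ℝ u u : ℝ) * inner ℝ v v - inner ℝ u v * inner ℝ u v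
      = (u 0 * v 1 - u 1 * v 0) ^ 2 by simp only [inner_coords]; ring]
  exact Real.sqrt_sq_eq_abs _

private lemma key_alg (a0 a1 b0 b1 c0 c1 d0 d1 o0 o1 r : ℝ)
    (hb : (b0 - o0) ^ 2 + (b1 - o1) ^ 2 = r ^ 2)
    (hc : (c0 - o0) ^ 2 + (c1 - o1) ^ 2 = r ^ 2)
    (hd : (d0 - o0) ^ 2 + (d1 - o1) ^ 2 = r ^ 2) :
    ((b0 - a0) * (c1 - a1) - (b1 - a1) * (c0 - a0))
        * ((b0 - d0) * (c0 - d0) + (b1 - d1) * (c1 - d1))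
      - ((b0 - a0) * (c0 - a0) + (b1 - a1) * (c1 - a1))
        * ((b0 - d0) * (c1 - d1) - (b1 - d1) * (c0 - d0))
    = (r ^ 2 - ((a0 - o0) ^ 2 + (a1 - o1) ^ 2))
        * ((b0 - d0) * (c1 - d1) - (b1 - d1) * (c0 - d0)) := by
  linear_combination ((c0 - a0) * (d1 - a1) - (c1 - a1) * (d0 - a0)) * hb
    - ((b0 - a0) * (d1 - a1) - (b1 - a1) * (d0 - a0)) * hc
    + ((b0 - a0) * (c1 - a1) - (b1 - a1) * (c0 - a0)) * hd

private lemma ext2 {x y : EuclideanSpace ℝ (Fin 2)} (h0 : x 0 = y 0) (h1 : x 1 = y 1) :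
    x = y := by
  ext i
  fin_cases i
  · exact h0
  · exact h1

private lemma collinear_of_det_eq_zero (B C D : EuclideanSpace ℝ (Fin 2))
    (h : (B 0 - D 0) * (C 1 - D 1) - (B 1 - D 1) * (C 0 - D 0) = 0) :
    Collinear ℝ ({B, C, D} : Set (EuclideanSpace ℝ (Fin 2))) := by
  by_cases hBD : B = D
  · apply (collinear_pair ℝ C D).subset
    intro x hx
    rcases hx with rfl | rfl | rfl
    · exact hBD ▸ Or.inr rfl
    · exact Or.inl rfl
    · exact Or.inr rfl
  · have hd : B 0 - D 0 ≠ 0 ∨ B 1 - D 1 ≠ 0 := by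
      by_contra hcon
      push_neg at hcon
      apply hBD
      apply ext2 <;> [have := hcon.1; have := hcon.2] <;> linarith
    rw [collinear_iff_of_mem (show D ∈ ({B, C, D} : Set _) by simp)]
    refine ⟨B - D, ?_⟩
    intro p hp
    rcases hp with rfl | rfl | rfl
    · exact ⟨1, by simp⟩
    · rcases hd with hd0 | hd1
      · refine ⟨(p 0 - D 0) / (B 0 - D 0), (ext2 ?_ ?_).symm⟩ <;>
          simp only [vadd_eq_add, PiLp.add_apply, PiLp.smul_apply, PiLp.sub_apply,
            smul_eq_mul]
        · field_simp
          ring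
        · field_simp
          linear_combination -h
      · refine ⟨(p 1 - D 1) / (B 1 - D 1), (ext2 ?_ ?_).symm⟩ <;>
          simp only [vadd_eq_add, PiLp.add_apply, PiLp.smul_apply, PiLp.sub_apply,
            smul_eq_mul]
        · field_simp
          linear_combination h
        · field_simp
          ring
    · exact ⟨0, by simp⟩

private lemma gt_pi_iff_sin_neg {x y : ℝ} (hx0 : 0 < x) (hx : x < π) (hy0 : 0 < y)
    (hy : y < π) : x + y > π ↔ Real.sin (x + y) < 0 := by
  constructor
  · intro h
    have h1 : Real.sin (x + y - π) = -Real.sin (x + y) := Real.sin_sub_pi _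
    have h2 : 0 < Real.sin (x + y - π) :=
      Real.sin_pos_of_pos_of_lt_pi (by linarith) (by linarith)
    linarith
  · intro h
    by_contra hcon
    push_neg at hcon
    have : 0 ≤ Real.sin (x + y) := Real.sin_nonneg_of_nonneg_of_le_pi (by linarith) hcon
    linarith

set_option maxHeartbeats 1000000 in
theorem inside_circumcircle_iff_angle_sum_gt_pi
    (A B C D O : EuclideanSpace ℝ (Fin 2)) (r : ℝ)
    (hncol : ¬ Collinear ℝ ({B, C, D} : Set (EuclideanSpace ℝ (Fin 2))))
    (hB : dist B O = r) (hC : dist C O = r) (hD : dist D O = r)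
    (hside : (affineSpan ℝ ({B, C} : Set (EuclideanSpace ℝ (Fin 2)))).SOppSide A D) :
    dist A O < r ↔ ∠ B A C + ∠ B D C > π := by
  -- basic quantities
  set dduv : ℝ := (B 0 - A 0) * (C 1 - A 1) - (B 1 - A 1) * (C 0 - A 0) with hdduv_def
  set ddpq : ℝ := (B 0 - D 0) * (C 1 - D 1) - (B 1 - D 1) * (C 0 - D 0) with hddpq_def
  -- D is not degenerate: ddpq ≠ 0
  have hddpq_ne : ddpq ≠ 0 := fun h => hncol (collinear_of_det_eq_zero B C D h)
  -- extract the strict betweenness point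
  obtain ⟨P, hPmem, hsbtw⟩ := hside.exists_sbtw
  obtain ⟨⟨t, htIoo, hPeq⟩, -⟩ := sbtw_iff_mem_image_Ioo_and_ne.mp hsbtw
  obtain ⟨ht0, ht1⟩ := htIoo
  have hPmem' : (P -ᵥ B) +ᵥ B ∈ line[ℝ, B, C] := by rwa [vsub_vadd]
  obtain ⟨s, hs⟩ := vadd_left_mem_affineSpan_pair.mp hPmem'
  -- coordinate equations
  have hs' : s • (C - B) = P - B := by rw [← vsub_eq_sub C B, ← vsub_eq_sub P B, hs]
  have hg0 : s * (C 0 - B 0) = P 0 - B 0 := by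
    have := congrArg (fun x => x 0) hs'
    simpa [PiLp.smul_apply, PiLp.sub_apply, smul_eq_mul] using this
  have hg1 : s * (C 1 - B 1) = P 1 - B 1 := by
    have := congrArg (fun x => x 1) hs'
    simpa [PiLp.smul_apply, PiLp.sub_apply, smul_eq_mul] using this
  have hPeq' : t • (D - A) + A = P := by
    rw [← hPeq, AffineMap.lineMap_apply, vsub_eq_sub, vadd_eq_add]
  have hh0 : t * (D 0 - A 0) + A 0 = P 0 := by
    have := congrArg (fun x => x 0) hPeq'
    simpa [PiLp.add_apply, PiLp.smul_apply, PiLp.sub_apply, smul_eq_mul] using this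
  have hh1 : t * (D 1 - A 1) + A 1 = P 1 := by
    have := congrArg (fun x => x 1) hPeq'
    simpa [PiLp.add_apply, PiLp.smul_apply, PiLp.sub_apply, smul_eq_mul] using this
  set M : ℝ := (C 0 - B 0) * (D 1 - A 1) - (C 1 - B 1) * (D 0 - A 0) with hM_def
  have hT1 : dduv = -(t * M) := by
    rw [hdduv_def, hM_def]
    linear_combination (C 1 - B 1) * hg0 - (C 1 - B 1) * hh0
      - (C 0 - B 0) * hg1 + (C 0 - B 0) * hh1
  have hT2 : ddpq = (1 - t) * M := by
    rw [hddpq_def, hM_def]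
    linear_combination (C 1 - B 1) * hg0 - (C 1 - B 1) * hh0
      - (C 0 - B 0) * hg1 + (C 0 - B 0) * hh1
  have hM_ne : M ≠ 0 := by
    intro h
    exact hddpq_ne (by rw [hT2, h, mul_zero])
  have hprod : dduv * ddpq < 0 := by
    rw [hT1, hT2]
    have h1 : 0 < t * (1 - t) * M ^ 2 :=
      mul_pos (mul_pos ht0 (by linarith)) (pow_pos (abs_pos.mpr hM_ne) 2 |>.trans_eq
        (by rw [sq_abs]))
    have h2 : -(t * M) * ((1 - t) * M) = -(t * (1 - t) * M ^ 2) := by ring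
    rw [h2]
    linarith
  have hdduv_ne : dduv ≠ 0 := fun h => by rw [h, zero_mul] at hprod; exact lt_irrefl 0 hprod
  -- circle equations
  have hb2 : (B 0 - O 0) ^ 2 + (B 1 - O 1) ^ 2 = r ^ 2 := by
    rw [← dist_sq_coords, hB]
  have hc2 : (C 0 - O 0) ^ 2 + (C 1 - O 1) ^ 2 = r ^ 2 := by
    rw [← dist_sq_coords, hC]
  have hd2 : (D 0 - O 0) ^ 2 + (D 1 - O 1) ^ 2 = r ^ 2 := by
    rw [← dist_sq_coords, hD]
  -- the key identity
  set ipuv : ℝ := (B 0 - A 0) * (C 0 - A 0) + (B 1 - A 1) * (C 1 - A 1) with hipuv_def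
  set ippq : ℝ := (B 0 - D 0) * (C 0 - D 0) + (B 1 - D 1) * (C 1 - D 1) with hippq_def
  have hkey : dduv * ippq - ipuv * ddpq = (r ^ 2 - dist A O ^ 2) * ddpq := by
    rw [dist_sq_coords]
    exact key_alg (A 0) (A 1) (B 0) (B 1) (C 0) (C 1) (D 0) (D 1) (O 0) (O 1) r hb2 hc2 hd2
  -- trig quantities
  set u : EuclideanSpace ℝ (Fin 2) := B - A with hu_def
  set v : EuclideanSpace ℝ (Fin 2) := C - A with hv_def
  set p : EuclideanSpace ℝ (Fin 2) := B - D with hp_def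
  set q : EuclideanSpace ℝ (Fin 2) := C - D with hq_def
  have hu0 : u 0 = B 0 - A 0 := rfl
  have hu1 : u 1 = B 1 - A 1 := rfl
  have hv0 : v 0 = C 0 - A 0 := rfl
  have hv1 : v 1 = C 1 - A 1 := rfl
  have hp0 : p 0 = B 0 - D 0 := rfl
  have hp1 : p 1 = B 1 - D 1 := rfl
  have hq0 : q 0 = C 0 - D 0 := rfl
  have hq1 : q 1 = C 1 - D 1 := rfl
  have hangA : ∠ B A C = InnerProductGeometry.angle u v := by
    rw [hu_def, hv_def, EuclideanGeometry.angle, ← vsub_eq_sub B A, ← vsub_eq_sub C A]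
  have hangD : ∠ B D C = InnerProductGeometry.angle p q := by
    rw [hp_def, hq_def, EuclideanGeometry.angle, ← vsub_eq_sub B D, ← vsub_eq_sub C D]
  have hsinA : Real.sin (∠ B A C) * (‖u‖ * ‖v‖) = |dduv| := by
    rw [hangA, sin_angle_coords, hu0, hu1, hv0, hv1]
  have hcosA : Real.cos (∠ B A C) * (‖u‖ * ‖v‖) = ipuv := by
    rw [hangA, InnerProductGeometry.cos_angle_mul_norm_mul_norm, inner_coords,
      hu0, hu1, hv0, hv1, hipuv_def]
  have hsinD : Real.sin (∠ B D C) * (‖p‖ * ‖q‖) = |ddpq| := by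
    rw [hangD, sin_angle_coords, hp0, hp1, hq0, hq1]
  have hcosD : Real.cos (∠ B D C) * (‖p‖ * ‖q‖) = ippq := by
    rw [hangD, InnerProductGeometry.cos_angle_mul_norm_mul_norm, inner_coords,
      hp0, hp1, hq0, hq1, hippq_def]
  -- positivity of norms
  have hNuv : 0 < ‖u‖ * ‖v‖ := by
    rcases (mul_nonneg (norm_nonneg u) (norm_nonneg v)).lt_or_eq with h | h
    · exact h
    · exact absurd (by rw [← hsinA, ← h, mul_zero]) (abs_ne_zero.mpr hdduv_ne).symm
  have hNpq : 0 < ‖p‖ * ‖q‖ := by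
    rcases (mul_nonneg (norm_nonneg p) (norm_nonneg q)).lt_or_eq with h | h
    · exact h
    · exact absurd (by rw [← hsinD, ← h, mul_zero]) (abs_ne_zero.mpr hddpq_ne).symm
  have hsinA_pos : 0 < Real.sin (∠ B A C) := by
    have habs : 0 < Real.sin (∠ B A C) * (‖u‖ * ‖v‖) := hsinA ▸ abs_pos.mpr hdduv_ne
    rcases mul_pos_iff.mp habs with ⟨h1, _⟩ | ⟨_, h2⟩
    · exact h1
    · linarith
  have hsinD_pos : 0 < Real.sin (∠ B D C) := by
    have habs : 0 < Real.sin (∠ B D C) * (‖p‖ * ‖q‖) := hsinD ▸ abs_pos.mpr hddpq_ne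
    rcases mul_pos_iff.mp habs with ⟨h1, _⟩ | ⟨_, h2⟩
    · exact h1
    · linarith
  -- angles strictly between 0 and π
  have hA0 : 0 < ∠ B A C := by
    rcases lt_or_eq_of_le (angle_nonneg B A C) with h | h
    · exact h
    · exfalso; rw [← h, Real.sin_zero] at hsinA_pos; exact lt_irrefl 0 hsinA_pos
  have hApi : ∠ B A C < π := by
    rcases lt_or_eq_of_le (angle_le_pi B A C) with h | h
    · exact h
    · exfalso; rw [h, Real.sin_pi] at hsinA_pos; exact lt_irrefl 0 hsinA_pos
  have hD0 : 0 < ∠ B D C := by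
    rcases lt_or_eq_of_le (angle_nonneg B D C) with h | h
    · exact h
    · exfalso; rw [← h, Real.sin_zero] at hsinD_pos; exact lt_irrefl 0 hsinD_pos
  have hDpi : ∠ B D C < π := by
    rcases lt_or_eq_of_le (angle_le_pi B D C) with h | h
    · exact h
    · exfalso; rw [h, Real.sin_pi] at hsinD_pos; exact lt_irrefl 0 hsinD_pos
  -- the sine of the sum
  have hsum : Real.sin (∠ B A C + ∠ B D C) * (‖u‖ * ‖v‖ * (‖p‖ * ‖q‖))
      = |dduv| * ippq + ipuv * |ddpq| := by
    rw [Real.sin_add]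
    calc (Real.sin (∠ B A C) * Real.cos (∠ B D C)
          + Real.cos (∠ B A C) * Real.sin (∠ B D C)) * (‖u‖ * ‖v‖ * (‖p‖ * ‖q‖))
        = (Real.sin (∠ B A C) * (‖u‖ * ‖v‖)) * (Real.cos (∠ B D C) * (‖p‖ * ‖q‖))
          + (Real.cos (∠ B A C) * (‖u‖ * ‖v‖)) * (Real.sin (∠ B D C) * (‖p‖ * ‖q‖)) := by
          ring
      _ = |dduv| * ippq + ipuv * |ddpq| := by
          rw [hsinA, hcosA, hsinD, hcosD]
  -- sign analysis
  have hsin_iff : Real.sin (∠ B A C + ∠ B D C) < 0 ↔ dist A O < r := by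
    have hr0 : 0 ≤ r := hB ▸ dist_nonneg
    have hdA : 0 ≤ dist A O := dist_nonneg
    have hdist_iff : dist A O < r ↔ 0 < r ^ 2 - dist A O ^ 2 := by
      constructor
      · intro h
        have := pow_lt_pow_left₀ h hdA two_ne_zero
        linarith
      · intro h
        by_contra hcon
        push_neg at hcon
        have := pow_le_pow_left₀ hr0 hcon 2
        linarith
    rw [hdist_iff]
    rcases lt_or_gt_of_ne hdduv_ne with hneg | hpos
    · -- dduv < 0, so ddpq > 0
      have hddpq_pos : 0 < ddpq := by
        rcases mul_neg_iff.mp hprod with ⟨h1, _⟩ | ⟨_, h2⟩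
        · linarith
        · exact h2
      have habs1 : |dduv| = -dduv := abs_of_neg hneg
      have habs2 : |ddpq| = ddpq := abs_of_pos hddpq_pos
      have hS : Real.sin (∠ B A C + ∠ B D C) * (‖u‖ * ‖v‖ * (‖p‖ * ‖q‖))
          = -((r ^ 2 - dist A O ^ 2) * ddpq) := by
        rw [hsum, habs1, habs2, ← hkey]; ring
      have hNN : 0 < ‖u‖ * ‖v‖ * (‖p‖ * ‖q‖) := mul_pos hNuv hNpq
      constructor
      · intro h
        have h3 : Real.sin (∠ B A C + ∠ B D C) * (‖u‖ * ‖v‖ * (‖p‖ * ‖q‖)) < 0 :=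
          mul_neg_of_neg_of_pos h hNN
        rw [hS] at h3
        have h4 : 0 < (r ^ 2 - dist A O ^ 2) * ddpq := by linarith
        rcases mul_pos_iff.mp h4 with ⟨h5, _⟩ | ⟨_, h6⟩
        · exact h5
        · linarith
      · intro h
        have h2 : Real.sin (∠ B A C + ∠ B D C) * (‖u‖ * ‖v‖ * (‖p‖ * ‖q‖)) < 0 := by
          rw [hS]
          have := mul_pos h hddpq_pos
          linarith
        by_contra hcon
        push_neg at hcon
        have := mul_nonneg hcon hNN.le
        linarith
    · -- dduv > 0, so ddpq < 0
      have hddpq_neg : ddpq < 0 := by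
        rcases mul_neg_iff.mp hprod with ⟨_, h1⟩ | ⟨h2, _⟩
        · exact h1
        · linarith
      have habs1 : |dduv| = dduv := abs_of_pos hpos
      have habs2 : |ddpq| = -ddpq := abs_of_neg hddpq_neg
      have hS : Real.sin (∠ B A C + ∠ B D C) * (‖u‖ * ‖v‖ * (‖p‖ * ‖q‖))
          = (r ^ 2 - dist A O ^ 2) * ddpq := by
        rw [hsum, habs1, habs2, ← hkey]; ring
      have hNN : 0 < ‖u‖ * ‖v‖ * (‖p‖ * ‖q‖) := mul_pos hNuv hNpq
      constructor
      · intro h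
        have h3 : Real.sin (∠ B A C + ∠ B D C) * (‖u‖ * ‖v‖ * (‖p‖ * ‖q‖)) < 0 :=
          mul_neg_of_neg_of_pos h hNN
        rw [hS] at h3
        rcases mul_neg_iff.mp h3 with ⟨h5, _⟩ | ⟨_, h6⟩
        · exact h5
        · linarith
      · intro h
        have h2 : Real.sin (∠ B A C + ∠ B D C) * (‖u‖ * ‖v‖ * (‖p‖ * ‖q‖)) < 0 := by
          rw [hS]
          exact mul_neg_of_pos_of_neg h hddpq_neg
        by_contra hcon
        push_neg at hcon
        have := mul_nonneg hcon hNN.le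
        linarith
  rw [← hsin_iff]
  exact (gt_pi_iff_sin_neg hA0 hApi hD0 hDpi).symm
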